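/- For every integer j ≥ 1, there exists a permutation a₁, …, a_m of {1, …, m} with m = 8j + 4 such that every position i ≡ 1 (mod 4) has weight 11j + 6 and every position i ≡ 3 (mod 4) has weight 9j + 6. -/
import Mathlib
set_option maxHeartbeats 1000000


/-- Weight of position `i` (1-based) in a sequence of length `m` given by `a`:
the sum of `a i` and its existing neighbors. -/
def seqWeight (m : Nat) (a : Nat → Nat) (i : Nat) : Nat :=
  (if 2 ≤ i then a (i-1) else 0) + a i + (if i + 1 ≤ m then a (i+1) else 0)

/-- Explicit construction of the permutation. -/
def permF (j i : ℕ) : ℕ :=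
  if i % 4 = 0 then i / 4
  else if i % 4 = 2 then (if i / 4 ≤ j then 3*j + 2 + i/4 else j + 1 + i/4)
  else if i % 4 = 1 then
    (if i = 1 then 8*j + 4 else if i/4 ≤ j then 8*j + 4 - 2*(i/4) else 10*j + 5 - 2*(i/4))
  else (if i/4 ≤ j then 6*j + 3 - 2*(i/4) else 8*j + 4 - 2*(i/4))


lemma permF0 (j i : ℕ) (h : i % 4 = 0) : permF j i = i / 4 := by
  unfold permF; split_ifs <;> omega

lemma permF2 (j i : ℕ) (h : i % 4 = 2) :
    permF j i = if i / 4 ≤ j then 3*j + 2 + i/4 else j + 1 + i/4 := by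
  unfold permF; split_ifs <;> omega

lemma permF1 (j i : ℕ) (h : i % 4 = 1) (h1 : i ≠ 1) :
    permF j i = if i/4 ≤ j then 8*j + 4 - 2*(i/4) else 10*j + 5 - 2*(i/4) := by
  unfold permF; split_ifs <;> omega

lemma permF1' (j : ℕ) : permF j 1 = 8*j + 4 := by
  norm_num [permF]

lemma permF3 (j i : ℕ) (h : i % 4 = 3) :
    permF j i = if i/4 ≤ j then 6*j + 3 - 2*(i/4) else 8*j + 4 - 2*(i/4) := by
  unfold permF; split_ifs <;> omega

theorem stmt19 :
    ∀ j : ℕ, 1 ≤ j →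
    ∃ a : ℕ → ℕ, Set.BijOn a (Set.Icc 1 (8*j + 4)) (Set.Icc 1 (8*j + 4)) ∧
      (∀ i, 1 ≤ i → i ≤ 8*j + 4 → i % 4 = 1 → seqWeight (8*j + 4) a i = 11*j + 6) ∧
      (∀ i, 1 ≤ i → i ≤ 8*j + 4 → i % 4 = 3 → seqWeight (8*j + 4) a i = 9*j + 6) := by
  intro j hj
  refine ⟨permF j, ?_, ?_, ?_⟩
  · have hmaps : Set.MapsTo (permF j) (Set.Icc 1 (8*j + 4)) (Set.Icc 1 (8*j + 4)) := by
      intro i hi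
      simp only [Set.mem_Icc] at hi ⊢
      unfold permF
      split_ifs <;> omega
    have hinj : Set.InjOn (permF j) (Set.Icc 1 (8*j + 4)) := by
      intro i₁ h₁ i₂ h₂ heq
      simp only [Set.mem_Icc] at h₁ h₂
      unfold permF at heq
      split_ifs at heq <;> omega
    exact ((Set.finite_Icc _ _).injOn_iff_bijOn_of_mapsTo hmaps).mp hinj
  · intro i h1 h2 h4
    unfold seqWeight
    rcases eq_or_ne i 1 with rfl | hne
    · rw [if_neg (by omega), if_pos (by omega), permF1', permF2 j 2 (by omega)]
      split_ifs <;> omega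
    · rw [if_pos (by omega), if_pos (by omega), permF0 j (i-1) (by omega),
        permF1 j i h4 hne, permF2 j (i+1) (by omega)]
      split_ifs <;> omega
  · intro i h1 h2 h4
    unfold seqWeight
    rw [if_pos (by omega), if_pos (by omega), permF2 j (i-1) (by omega),
      permF3 j i h4, permF0 j (i+1) (by omega)]
    split_ifs <;> omega
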